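/- Let 𝔤 = 𝔤₀ ⊕ 𝔤₁ be a Lie superalgebra and t a formal even variable. Then the ℤ≥0-covering 𝔭 = F'(𝔤) is isomorphic as a ℤ-graded Lie superalgebra to the non-negative loop subalgebra ⊕_{i≥0} 𝔤_ī ⊗ t^i ⊂ 𝔤 ⊗ K[t], with 𝔭_i ≅ 𝔤_ī ⊗ t^i, where the bracket on 𝔤 ⊗ K[t] is [X ⊗ t^i, Y ⊗ t^j] = [X,Y] ⊗ t^{i+j} and the parity of X ⊗ t^i is ī = i mod 2 (which equals |X| on the displayed subspace). -/

import Mathlib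

/-- The sign `(-1)^{ij}` for parities `i j : ℤ₂`, as an element of `K`. -/
def ssign (K : Type*) [Field K] (i j : ZMod 2) : K := if i = 1 ∧ j = 1 then -1 else 1

/-- An `A`-graded Lie superalgebra over `K`, where `A` is an abelian group and the
parities are governed by a group homomorphism `δ : A → ℤ₂`: a grading `p` of the
carrier `L` by submodules whose internal direct sum is `L`, and a bilinear bracket `br`
with `[p a, p b] ⊆ p (a+b)`, super skew-symmetry and the super Jacobi identity
(signs `(-1)^{δ(a)δ(b)}`). -/
structure IsGradedLieSuperAlg (K : Type*) [Field K] {A : Type*} [AddCommGroup A]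
    [DecidableEq A] {L : Type*} [AddCommGroup L] [Module K L]
    (δ : A →+ ZMod 2) (p : A → Submodule K L) (br : L → L → L) : Prop where
  add_left : ∀ x x' y, br (x + x') y = br x y + br x' y
  smul_left : ∀ (c : K) x y, br (c • x) y = c • br x y
  add_right : ∀ x y y', br x (y + y') = br x y + br x y'
  smul_right : ∀ (c : K) x y, br x (c • y) = c • br x y
  internal : DirectSum.IsInternal p
  grade : ∀ a b, ∀ x ∈ p a, ∀ y ∈ p b, br x y ∈ p (a + b)
  skew : ∀ a b, ∀ x ∈ p a, ∀ y ∈ p b, br x y = - ssign K (δ a) (δ b) • br y x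
  jacobi : ∀ a b, ∀ x ∈ p a, ∀ y ∈ p b, ∀ z,
    br x (br y z) - ssign K (δ a) (δ b) • br y (br x z) = br (br x y) z

/-- A Lie superalgebra structure on a single carrier `L`: a ℤ₂-grading by submodules and a
bilinear graded bracket with super skew-symmetry and the super Jacobi identity. -/
structure IsLieSuperOn (K : Type*) [Field K] {L : Type*} [AddCommGroup L] [Module K L]
    (p : ZMod 2 → Submodule K L) (br : L → L → L) : Prop where
  add_left : ∀ x x' y, br (x + x') y = br x y + br x' y
  smul_left : ∀ (c : K) x y, br (c • x) y = c • br x y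
  add_right : ∀ x y y', br x (y + y') = br x y + br x y'
  smul_right : ∀ (c : K) x y, br x (c • y) = c • br x y
  internal : DirectSum.IsInternal p
  grade : ∀ i j, ∀ x ∈ p i, ∀ y ∈ p j, br x y ∈ p (i + j)
  skew : ∀ i j, ∀ x ∈ p i, ∀ y ∈ p j, br x y = - ssign K i j • br y x
  jacobi : ∀ i j, ∀ x ∈ p i, ∀ y ∈ p j, ∀ z,
    br x (br y z) - ssign K i j • br y (br x z) = br (br x y) z

namespace Stmt16

/-- The loop bracket on `𝔤 ⊗ K[t] = ℕ →₀ G`: `[X ⊗ tⁱ, Y ⊗ tʲ] = [X,Y] ⊗ t^{i+j}`. -/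
noncomputable def loopBr {G : Type*} [AddCommGroup G]
    (brg : G → G → G) (f g : ℕ →₀ G) : ℕ →₀ G :=
  f.sum fun i v => g.sum fun j w => Finsupp.single (i + j) (brg v w)

/-- The degree-`i` piece `𝔤_ī ⊗ tⁱ` of the non-negative loop algebra `⊕_{i≥0} 𝔤_ī ⊗ tⁱ`:
the parity of `X ⊗ tⁱ` is `ī = i mod 2`, which equals `|X|` on this subspace. -/
noncomputable def loopGrade {K : Type*} [Field K] {G : Type*} [AddCommGroup G] [Module K G]
    (qg : ZMod 2 → Submodule K G) (i : ℕ) : Submodule K (ℕ →₀ G) :=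
  Submodule.span K {z : ℕ →₀ G | ∃ x ∈ qg (i : ZMod 2), z = Finsupp.single i x}

/-- Let `𝔤 = 𝔤₀ ⊕ 𝔤₁` be a Lie superalgebra and `t` a formal even
variable.  Any `ℤ≥0`-covering `𝔭 = F'(𝔤)` of `𝔤` (i.e. a ℤ-graded Lie superalgebra with
support `ℤ≥0` and a covering homomorphism `Π' : 𝔭 → 𝔤` along `ℤ → ℤ₂`) is isomorphic, as
a ℤ-graded Lie superalgebra, to the non-negative loop subalgebra
`⊕_{i≥0} 𝔤_ī ⊗ tⁱ ⊂ 𝔤 ⊗ K[t]`, with `𝔭_i ≅ 𝔤_ī ⊗ tⁱ`, where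
`[X ⊗ tⁱ, Y ⊗ tʲ] = [X,Y] ⊗ t^{i+j}` and the parity of `X ⊗ tⁱ` is `i mod 2`. -/
theorem covering_iso_loop
    {K : Type*} [Field K]
    {G : Type*} [AddCommGroup G] [Module K G]
    (qg : ZMod 2 → Submodule K G) (brg : G → G → G)
    (hg : IsLieSuperOn K qg brg)
    {P : Type*} [AddCommGroup P] [Module K P]
    (pgr : ℤ → Submodule K P) (brp : P → P → P)
    (hp : IsGradedLieSuperAlg K (Int.castAddHom (ZMod 2)) pgr brp)
    (prj : P →ₗ[K] G)
    (hhom : ∀ x y, prj (brp x y) = brg (prj x) (prj y))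
    (hmaps : ∀ i : ℤ, ∀ x ∈ pgr i, prj x ∈ qg (i : ZMod 2))
    (hinj : ∀ i : ℤ, ∀ x ∈ pgr i, prj x = 0 → x = 0)
    (hsurj : ∀ i : ℤ, 0 ≤ i → ∀ y ∈ qg (i : ZMod 2), ∃ x ∈ pgr i, prj x = y)
    (hsupp : ∀ i : ℤ, i < 0 → pgr i = ⊥) :
    ∃ e : P →ₗ[K] (ℕ →₀ G),
      Function.Injective e ∧
      (∀ x y, e (brp x y) = loopBr brg (e x) (e y)) ∧
      (∀ i : ℕ, Submodule.map e (pgr (i : ℤ)) = loopGrade qg i) := by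
  classical
  -- zero lemmas for brg and brp
  have brg0l : ∀ w, brg 0 w = 0 := by
    intro w
    have := hg.smul_left 0 0 w; simpa using this
  have brg0r : ∀ w, brg w 0 = 0 := by
    intro w
    have := hg.smul_right 0 w 0; simpa using this
  have brp0l : ∀ w, brp 0 w = 0 := by
    intro w
    have := hp.smul_left 0 0 w; simpa using this
  have brp0r : ∀ w, brp w 0 = 0 := by
    intro w
    have := hp.smul_right 0 w 0; simpa using this
  -- loopBr lemmas
  have lB_single : ∀ (a b : ℕ) (v w : G),
      loopBr brg (Finsupp.single a v) (Finsupp.single b w)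
        = Finsupp.single (a + b) (brg v w) := by
    intro a b v w
    unfold loopBr
    rw [Finsupp.sum_single_index, Finsupp.sum_single_index]
    · simp [brg0r]
    · rw [Finsupp.sum_single_index] <;> simp [brg0l, brg0r]
  have lB_zero_left : ∀ g, loopBr brg 0 g = 0 := by
    intro g; unfold loopBr; simp
  have lB_zero_right : ∀ f, loopBr brg f 0 = 0 := by
    intro f; unfold loopBr; simp
  have lB_add_left : ∀ f f' g, loopBr brg (f + f') g = loopBr brg f g + loopBr brg f' g := by
    intro f f' g
    unfold loopBr
    rw [Finsupp.sum_add_index]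
    · intro i _; simp [brg0l]
    · intro i _ v v'
      rw [← Finsupp.sum_add]
      congr 1; funext j w
      rw [hg.add_left, Finsupp.single_add]
  have lB_add_right : ∀ f g g', loopBr brg f (g + g') = loopBr brg f g + loopBr brg f g' := by
    intro f g g'
    unfold loopBr
    rw [← Finsupp.sum_add]
    congr 1; funext i v
    rw [Finsupp.sum_add_index]
    · intro j _; simp [brg0r]
    · intro j _ w w'
      rw [hg.add_right, Finsupp.single_add]
  -- the decomposition equivalence
  set D : (DirectSum ℤ (fun i => ↥(pgr i))) ≃ₗ[K] P :=
    LinearEquiv.ofBijective (DirectSum.coeLinearMap pgr) hp.internal with hD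
  set φ : (DirectSum ℤ (fun i => ↥(pgr i))) →ₗ[K] (ℕ →₀ G) :=
    DirectSum.toModule K ℤ (ℕ →₀ G)
      (fun i => (Finsupp.lsingle i.toNat).comp (prj.comp (pgr i).subtype)) with hφ
  set e : P →ₗ[K] (ℕ →₀ G) := φ.comp D.symm.toLinearMap with he
  have ehom : ∀ (i : ℤ) (x : P), x ∈ pgr i → e x = Finsupp.single i.toNat (prj x) := by
    intro i x hx
    have h1 : D.symm x = DirectSum.lof K ℤ (fun i => pgr i) i ⟨x, hx⟩ := by
      apply D.injective
      rw [LinearEquiv.apply_symm_apply]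
      simp only [hD, LinearEquiv.ofBijective_apply]
      rw [DirectSum.lof_eq_of]
      exact (DirectSum.coeLinearMap_of pgr i ⟨x, hx⟩).symm
    simp only [he, LinearMap.comp_apply, LinearEquiv.coe_coe, h1, hφ,
      DirectSum.toModule_lof]
    rfl
  refine ⟨e, ?_, ?_, ?_⟩
  · -- injectivity
    rw [← LinearMap.ker_eq_bot]
    rw [Submodule.eq_bot_iff]
    intro x hx
    rw [LinearMap.mem_ker] at hx
    set d := D.symm x with hd
    have hdneg : ∀ i : ℤ, i < 0 → d i = 0 := by
      intro i hi
      have : (d i : P) = 0 := (Submodule.eq_bot_iff _).mp (hsupp i hi) _ (d i).2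
      exact Subtype.ext this
    have hφd : φ d = 0 := by
      simpa only [he, LinearMap.comp_apply, LinearEquiv.coe_coe, ← hd] using hx
    have hdz : d = 0 := by
      refine DFinsupp.ext fun i => ?_
      rcases lt_or_ge i 0 with hi | hi
      · rw [hdneg i hi]; rfl
      · -- i ≥ 0, i = (i.toNat : ℤ)
        by_cases hmem : i ∈ DFinsupp.support d
        · -- compute (φ d) i.toNat
          have hsum : φ d = ∑ j ∈ DFinsupp.support d,
              Finsupp.single j.toNat (prj (d j : P)) := by
            conv_lhs => rw [← DirectSum.sum_support_of d]
            rw [map_sum]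
            refine Finset.sum_congr rfl fun j _ => ?_
            rw [← DirectSum.lof_eq_of K, hφ, DirectSum.toModule_lof]
            rfl
          have hval : (φ d) i.toNat = prj (d i : P) := by
            rw [hsum, Finsupp.finset_sum_apply]
            rw [Finset.sum_eq_single_of_mem i hmem]
            · simp
            · intro j hj hji
              have hj0 : 0 ≤ j := by
                by_contra h
                exact (DFinsupp.mem_support_iff.mp hj) (hdneg j (lt_of_not_ge h))
              rw [Finsupp.single_apply, if_neg]
              intro hc
              exact hji (by omega)
            
          rw [hφd] at hval
          have : (d i : P) = 0 := hinj i _ (d i).2 hval.symm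
          exact Subtype.ext this
        · simpa using (DFinsupp.notMem_support_iff.mp hmem)
    have hx0 : D d = x := by rw [hd, LinearEquiv.apply_symm_apply]
    rw [hdz] at hx0
    rw [← hx0, LinearEquiv.map_zero]
  · -- bracket
    have key : ∀ x, (∃ i, x ∈ pgr i) → ∀ y, (∃ j, y ∈ pgr j) →
        e (brp x y) = loopBr brg (e x) (e y) := by
      rintro x ⟨i, hx⟩ y ⟨j, hy⟩
      rcases lt_or_ge i 0 with hi | hi
      · rw [hsupp i hi] at hx
        simp only [Submodule.mem_bot] at hx
        subst hx
        rw [brp0l, map_zero, lB_zero_left]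
      rcases lt_or_ge j 0 with hj | hj
      · rw [hsupp j hj] at hy
        simp only [Submodule.mem_bot] at hy
        subst hy
        rw [brp0r, map_zero, lB_zero_right]
      have hb : brp x y ∈ pgr (i + j) := hp.grade i j x hx y hy
      rw [ehom _ _ hb, ehom _ _ hx, ehom _ _ hy, lB_single, hhom]
      congr 1
      omega
    -- extend by bilinearity using iSup induction
    have htop : (⨆ i, pgr i) = ⊤ := hp.internal.submodule_iSup_eq_top
    intro x y
    have hxtop : x ∈ ⨆ i, pgr i := htop ▸ Submodule.mem_top
    have hytop : y ∈ ⨆ i, pgr i := htop ▸ Submodule.mem_top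
    induction hxtop using Submodule.iSup_induction' with
    | mem i x hx =>
      induction hytop using Submodule.iSup_induction' with
      | mem j y hy => exact key x ⟨i, hx⟩ y ⟨j, hy⟩
      | zero => rw [brp0r, map_zero, lB_zero_right]
      | add y y' _ _ ihy ihy' =>
        rw [hp.add_right, map_add, map_add, lB_add_right, ihy, ihy']
    | zero => rw [brp0l, map_zero, lB_zero_left]
    | add x x' _ _ ihx ihx' =>
      rw [hp.add_left, map_add, map_add, lB_add_left, ihx, ihx']
  · -- grading
    intro i
    apply le_antisymm
    · rintro _ ⟨x, hx, rfl⟩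
      apply Submodule.subset_span
      refine ⟨prj x, ?_, ?_⟩
      · have := hmaps (i : ℤ) x hx
        simpa using this
      · rw [ehom _ _ hx]
        simp
    · rw [loopGrade, Submodule.span_le]
      rintro z ⟨v, hv, rfl⟩
      have hv' : v ∈ qg ((i : ℤ) : ZMod 2) := by simpa using hv
      obtain ⟨x, hx, hpx⟩ := hsurj (i : ℤ) (by positivity) v hv'
      refine ⟨x, hx, ?_⟩
      rw [ehom _ _ hx, hpx]
      simp


end Stmt16
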